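/- Let g : [0, π/3] → ℝ be continuous, strictly positive, continuously differentiable on (0, π/3), with one-sided derivatives g′₊(0) and g′₋(π/3) at the endpoints. Then the function G = q/g(θ) is differentiable at every point of ℝ² \ {(0,0)} if and only if g′₊(0) = 0 and g′₋(π/3) = 0; that is, the deviatoric yield function q/g(θ) is smooth away from the hydrostatic axis exactly when g′ vanishes at both θ = 0 and θ = π/3. -/

import Mathlib

/-- The deviatoric stress invariant q(S₁,S₂) = √(3(S₁² + S₁S₂ + S₂²)), with S₃ = −S₁−S₂. -/
noncomputable def qf (S : ℝ × ℝ) : ℝ :=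
  Real.sqrt (3 * (S.1 ^ 2 + S.1 * S.2 + S.2 ^ 2))

/-- The Lode angle θ(S₁,S₂) = (1/3)·arccos((27/2)·S₁S₂S₃/q³) ∈ [0, π/3], S₃ = −S₁−S₂. -/
noncomputable def θf (S : ℝ × ℝ) : ℝ :=
  (1 / 3) * Real.arccos ((27 / 2) * (S.1 * S.2 * (-S.1 - S.2)) / (qf S) ^ 3)

/-- The deviatoric yield function G(S₁,S₂) = q(S₁,S₂)/g(θ(S₁,S₂)) (equal to 0 at the
origin, where q = 0). -/
noncomputable def Gf (g : ℝ → ℝ) (S : ℝ × ℝ) : ℝ :=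
  qf S / g (θf S)


open Real

noncomputable def Dt (S : ℝ × ℝ) : ℝ := (S.1 - S.2) * (S.1 + 2*S.2) * (2*S.1 + S.2)

noncomputable def hfun (S : ℝ × ℝ) : ℝ :=
  (27 / 2) * (S.1 * S.2 * (-S.1 - S.2)) / (qf S) ^ 3

lemma Q_pos {S : ℝ × ℝ} (h : S ≠ (0,0)) : 0 < 3 * (S.1 ^ 2 + S.1 * S.2 + S.2 ^ 2) := by
  rcases S with ⟨a,b⟩
  have : a ≠ 0 ∨ b ≠ 0 := by
    by_contra hc; push_neg at hc; exact h (by simp [hc.1, hc.2])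
  rcases this with ha | hb
  · nlinarith [sq_nonneg (2*a+b), sq_nonneg b, sq_pos_of_ne_zero ha]
  · nlinarith [sq_nonneg (a+2*b), sq_nonneg a, sq_pos_of_ne_zero hb]

lemma qf_pos {S : ℝ × ℝ} (h : S ≠ (0,0)) : 0 < qf S := Real.sqrt_pos.2 (Q_pos h)

lemma qf_sq (S : ℝ × ℝ) : qf S ^ 2 = 3 * (S.1 ^ 2 + S.1 * S.2 + S.2 ^ 2) := by
  have : 0 ≤ 3 * (S.1 ^ 2 + S.1 * S.2 + S.2 ^ 2) := by
    nlinarith [sq_nonneg (S.1+S.2), sq_nonneg S.1, sq_nonneg S.2]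
  exact Real.sq_sqrt this

lemma qf6 (S : ℝ × ℝ) : (qf S)^6 = 27 * (S.1 ^ 2 + S.1 * S.2 + S.2 ^ 2)^3 := by
  have h := qf_sq S
  calc (qf S)^6 = ((qf S)^2)^3 := by ring
  _ = _ := by rw [h]; ring

lemma key_identity {S : ℝ × ℝ} (h : S ≠ (0,0)) :
    (1 - hfun S) * (1 + hfun S) * (qf S)^6
      = (27/4) * (Dt S)^2 := by
  unfold Dt
  have hq := qf_pos h
  have hq3 : (qf S)^3 ≠ 0 := by positivity
  have hh : hfun S * (qf S)^3 = (27/2) * (S.1 * S.2 * (-S.1 - S.2)) := by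
    unfold hfun; field_simp
  calc (1 - hfun S) * (1 + hfun S) * (qf S)^6
      = (qf S)^6 - (hfun S * (qf S)^3)^2 := by ring
  _ = 27 * (S.1 ^ 2 + S.1 * S.2 + S.2 ^ 2)^3
        - ((27/2) * (S.1 * S.2 * (-S.1 - S.2)))^2 := by rw [qf6, hh]
  _ = _ := by ring

lemma hfun_sq_le_one {S : ℝ × ℝ} (h : S ≠ (0,0)) : (hfun S)^2 ≤ 1 := by
  have hkey := key_identity h
  have hq := qf_pos h
  have h6 : 0 < (qf S)^6 := by positivity
  nlinarith [sq_nonneg (Dt S)]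

lemma hfun_mem {S : ℝ × ℝ} (h : S ≠ (0,0)) : -1 ≤ hfun S ∧ hfun S ≤ 1 :=
  abs_le.1 (abs_le_one_iff_mul_self_le_one.2 (by nlinarith [hfun_sq_le_one h]))


lemma sqrt_le_arccos {x : ℝ} (h1 : -1 ≤ x) (h2 : x ≤ 1) :
    Real.sqrt (2*(1-x)) ≤ Real.arccos x := by
  have hy0 : 0 ≤ arccos x := arccos_nonneg x
  have hc : cos (arccos x) = x := Real.cos_arccos h1 h2
  have hb : 1 - (arccos x)^2/2 ≤ x := by
    calc 1 - (arccos x)^2/2 ≤ cos (arccos x) := Real.one_sub_sq_div_two_le_cos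
    _ = x := hc
  have : 2*(1-x) ≤ (arccos x)^2 := by linarith
  calc Real.sqrt (2*(1-x)) ≤ Real.sqrt ((arccos x)^2) := Real.sqrt_le_sqrt this
  _ = arccos x := by rw [Real.sqrt_sq hy0]

lemma arccos_le_sqrt {x : ℝ} (h1 : -1 ≤ x) (h2 : x ≤ 1) :
    Real.arccos x ≤ π * Real.sqrt ((1-x)/2) := by
  have hy0 : 0 ≤ arccos x := arccos_nonneg x
  have hyp : arccos x ≤ π := arccos_le_pi x
  have hc : cos (arccos x) = x := Real.cos_arccos h1 h2
  have hb : x ≤ 1 - 2/π^2 * (arccos x)^2 := by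
    calc x = cos (arccos x) := hc.symm
    _ ≤ 1 - 2/π^2 * (arccos x)^2 := Real.cos_le_one_sub_mul_cos_sq (by rw [abs_of_nonneg hy0]; exact hyp)
  have hpi := Real.pi_pos
  have h3 : (arccos x)^2 ≤ π^2 * ((1-x)/2) := by
    have h4 : 2/π^2 * (arccos x)^2 ≤ 1 - x := by linarith
    rw [div_mul_eq_mul_div, div_le_iff₀ (by positivity)] at h4
    nlinarith
  calc arccos x = Real.sqrt ((arccos x)^2) := (Real.sqrt_sq hy0).symm
  _ ≤ Real.sqrt (π^2 * ((1-x)/2)) := Real.sqrt_le_sqrt h3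
  _ = π * Real.sqrt ((1-x)/2) := by rw [Real.sqrt_mul (by positivity), Real.sqrt_sq hpi.le]

lemma θf_eq (S : ℝ × ℝ) : θf S = (1/3) * Real.arccos (hfun S) := rfl

lemma θf_nonneg (S : ℝ × ℝ) : 0 ≤ θf S := by
  rw [θf_eq]
  have := Real.arccos_nonneg (hfun S); linarith

lemma θf_le (S : ℝ × ℝ) : θf S ≤ π / 3 := by
  rw [θf_eq]
  have := Real.arccos_le_pi (hfun S)
  linarith


lemma diffAt_div {f h : ℝ × ℝ → ℝ} {S : ℝ × ℝ} (hf : DifferentiableAt ℝ f S)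
    (hh : DifferentiableAt ℝ h S) (hne : h S ≠ 0) :
    DifferentiableAt ℝ (fun S => f S / h S) S := by
  simp only [div_eq_mul_inv]
  exact hf.mul (hh.inv hne)

lemma qf_cont : Continuous qf := by
  unfold qf; fun_prop

lemma ne_zero_of_qf_pos {S : ℝ × ℝ} (h : 0 < qf S) : S ≠ (0,0) := by
  intro he
  rw [he] at h
  simp [qf] at h

lemma qf_diff {S : ℝ × ℝ} (h : S ≠ (0,0)) : DifferentiableAt ℝ qf S := by
  have hin : DifferentiableAt ℝ (fun S : ℝ×ℝ => 3*(S.1^2+S.1*S.2+S.2^2)) S := by fun_prop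
  exact ((Real.contDiffAt_sqrt (ne_of_gt (Q_pos h))).differentiableAt one_ne_zero).comp S hin

lemma hfun_diff {S : ℝ × ℝ} (h : S ≠ (0,0)) : DifferentiableAt ℝ hfun S := by
  have hq := qf_pos h
  have hnum : DifferentiableAt ℝ (fun S : ℝ×ℝ => (27/2) * (S.1 * S.2 * (-S.1 - S.2))) S := by
    fun_prop
  have hne : (qf S)^3 ≠ 0 := by positivity
  have hden : DifferentiableAt ℝ (fun S : ℝ×ℝ => (qf S)^3) S := (qf_diff h).pow 3
  unfold hfun
  exact diffAt_div hnum hden hne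

lemma θf_cont {S : ℝ × ℝ} (h : S ≠ (0,0)) : ContinuousAt θf S := by
  have : ContinuousAt (fun S => (1/3) * Real.arccos (hfun S)) S :=
    (Real.continuous_arccos.continuousAt.comp (hfun_diff h).continuousAt).const_mul _
  exact this.congr (by filter_upwards with S using (θf_eq S).symm)

lemma comp_diff_at_one {g : ℝ → ℝ} {S₀ : ℝ × ℝ} (hS : S₀ ≠ (0,0))
    (hone : hfun S₀ = 1)
    (h0 : HasDerivWithinAt g 0 (Set.Ici 0) 0) :
    HasFDerivAt (fun S => g (θf S)) (0 : (ℝ × ℝ) →L[ℝ] ℝ) S₀ := by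
  have hq0 := qf_pos hS
  have hθ0 : θf S₀ = 0 := by rw [θf_eq, hone, Real.arccos_one, mul_zero]
  have hD0 : Dt S₀ = 0 := by
    have hki := key_identity hS
    rw [hone] at hki
    have h2 : (Dt S₀)^2 = 0 := by nlinarith
    exact pow_eq_zero_iff (by norm_num) |>.1 h2
  have hDdiff : DifferentiableAt ℝ Dt S₀ := by unfold Dt; fun_prop
  have hD : (fun S => Dt S) =O[nhds S₀] (fun S => S - S₀) := by
    have := hDdiff.isBigO_sub
    simpa [hD0] using this
  -- θf is O(Dt) near S₀
  have hθD : (fun S => θf S) =O[nhds S₀] (fun S => Dt S) := by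
    rw [Asymptotics.isBigO_iff]
    refine ⟨(π/3) * Real.sqrt ((27/8) * ((qf S₀/2)^6)⁻¹), ?_⟩
    have hev1 : ∀ᶠ S in nhds S₀, qf S₀/2 < qf S :=
      qf_cont.continuousAt.eventually (eventually_gt_nhds (by linarith))
    have hev2 : ∀ᶠ S in nhds S₀, 0 < hfun S :=
      (hfun_diff hS).continuousAt.eventually (eventually_gt_nhds (by rw [hone]; norm_num))
    filter_upwards [hev1, hev2] with S h1 h2
    have hSne : S ≠ (0,0) := ne_zero_of_qf_pos (by linarith)
    obtain ⟨hm1, hm2⟩ := hfun_mem hSne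
    have hθnn := θf_nonneg S
    have hkey := key_identity hSne
    have hq6 : (qf S₀/2)^6 ≤ (qf S)^6 := by
      apply pow_le_pow_left₀ (by linarith) (le_of_lt h1)
    have ha : (0:ℝ) ≤ 1 - hfun S := by linarith
    have hstep : (1 - hfun S) * (qf S₀/2)^6 ≤ (27/4) * (Dt S)^2 := by
      calc (1 - hfun S) * (qf S₀/2)^6 ≤ (1 - hfun S) * (qf S)^6 :=
            mul_le_mul_of_nonneg_left hq6 ha
        _ ≤ (1 - hfun S) * (1 + hfun S) * (qf S)^6 := by
            nlinarith [mul_nonneg (mul_nonneg ha h2.le)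
              (pow_nonneg (by linarith : (0:ℝ) ≤ qf S) 6)]
        _ = (27/4) * (Dt S)^2 := hkey
    have hq6pos : (0:ℝ) < (qf S₀/2)^6 := by positivity
    have hfrac : (1 - hfun S)/2 ≤ (27/8) * ((qf S₀/2)^6)⁻¹ * (Dt S)^2 := by
      have h5 : (1 - hfun S) ≤ 27/4 * (Dt S)^2 * ((qf S₀/2)^6)⁻¹ := by
        rw [← le_div_iff₀ hq6pos] at hstep
        rwa [div_eq_mul_inv] at hstep
      nlinarith [h5]
    have harc : θf S ≤ (π/3) * Real.sqrt ((1 - hfun S)/2) := by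
      rw [θf_eq]
      have := arccos_le_sqrt hm1 hm2
      linarith
    have hsq : Real.sqrt ((1 - hfun S)/2)
        ≤ Real.sqrt ((27/8) * ((qf S₀/2)^6)⁻¹) * |Dt S| := by
      calc Real.sqrt ((1 - hfun S)/2)
          ≤ Real.sqrt ((27/8) * ((qf S₀/2)^6)⁻¹ * (Dt S)^2) := Real.sqrt_le_sqrt hfrac
        _ = Real.sqrt ((27/8) * ((qf S₀/2)^6)⁻¹) * Real.sqrt ((Dt S)^2) := by
            rw [Real.sqrt_mul (by positivity)]
        _ = _ := by rw [Real.sqrt_sq_eq_abs]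
    have hpi := Real.pi_pos
    rw [Real.norm_eq_abs, Real.norm_eq_abs, abs_of_nonneg hθnn]
    calc θf S ≤ (π/3) * Real.sqrt ((1 - hfun S)/2) := harc
      _ ≤ (π/3) * (Real.sqrt ((27/8) * ((qf S₀/2)^6)⁻¹) * |Dt S|) := by
          apply mul_le_mul_of_nonneg_left hsq (by positivity)
      _ = (π/3) * Real.sqrt ((27/8) * ((qf S₀/2)^6)⁻¹) * |Dt S| := by ring
  have hθO : (fun S => θf S) =O[nhds S₀] (fun S => S - S₀) := hθD.trans hD
  -- little-o from one-sided derivative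
  have hlittle : (fun x => g x - g 0) =o[nhdsWithin 0 (Set.Ici 0)] (fun x => x - 0) := by
    have := h0.isLittleO
    simpa using this
  have htend : Filter.Tendsto θf (nhds S₀) (nhdsWithin 0 (Set.Ici 0)) := by
    rw [tendsto_nhdsWithin_iff]
    constructor
    · have := (θf_cont hS).tendsto
      rwa [hθ0] at this
    · filter_upwards with S using θf_nonneg S
  have hcomp : (fun S => g (θf S) - g 0) =o[nhds S₀] (fun S => θf S - 0) :=
    hlittle.comp_tendsto htend
  simp only [sub_zero] at hcomp
  have hfinal : (fun S => g (θf S) - g (θf S₀)) =o[nhds S₀] (fun S => S - S₀) := by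
    rw [hθ0]
    exact hcomp.trans_isBigO hθO
  exact .of_isLittleO (by simpa using hfinal)

lemma comp_diff_at_neg_one {g : ℝ → ℝ} {S₀ : ℝ × ℝ} (hS : S₀ ≠ (0,0))
    (hone : hfun S₀ = -1)
    (hpi : HasDerivWithinAt g 0 (Set.Iic (π/3)) (π/3)) :
    HasFDerivAt (fun S => g (θf S)) (0 : (ℝ × ℝ) →L[ℝ] ℝ) S₀ := by
  have hq0 := qf_pos hS
  have hθ0 : θf S₀ = π/3 := by rw [θf_eq, hone, Real.arccos_neg_one]; ring
  have hD0 : Dt S₀ = 0 := by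
    have hki := key_identity hS
    rw [hone] at hki
    have h2 : (Dt S₀)^2 = 0 := by nlinarith
    exact pow_eq_zero_iff (by norm_num) |>.1 h2
  have hDdiff : DifferentiableAt ℝ Dt S₀ := by unfold Dt; fun_prop
  have hD : (fun S => Dt S) =O[nhds S₀] (fun S => S - S₀) := by
    have := hDdiff.isBigO_sub
    simpa [hD0] using this
  have hθD : (fun S => θf S - π/3) =O[nhds S₀] (fun S => Dt S) := by
    rw [Asymptotics.isBigO_iff]
    refine ⟨(π/3) * Real.sqrt ((27/8) * ((qf S₀/2)^6)⁻¹), ?_⟩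
    have hev1 : ∀ᶠ S in nhds S₀, qf S₀/2 < qf S :=
      qf_cont.continuousAt.eventually (eventually_gt_nhds (by linarith))
    have hev2 : ∀ᶠ S in nhds S₀, hfun S < 0 :=
      (hfun_diff hS).continuousAt.eventually (eventually_lt_nhds (by rw [hone]; norm_num))
    filter_upwards [hev1, hev2] with S h1 h2
    have hSne : S ≠ (0,0) := ne_zero_of_qf_pos (by linarith)
    obtain ⟨hm1, hm2⟩ := hfun_mem hSne
    have hθle := θf_le S
    have hkey := key_identity hSne
    have hq6 : (qf S₀/2)^6 ≤ (qf S)^6 := by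
      apply pow_le_pow_left₀ (by linarith) (le_of_lt h1)
    have ha : (0:ℝ) ≤ 1 + hfun S := by linarith
    have hstep : (1 + hfun S) * (qf S₀/2)^6 ≤ (27/4) * (Dt S)^2 := by
      calc (1 + hfun S) * (qf S₀/2)^6 ≤ (1 + hfun S) * (qf S)^6 :=
            mul_le_mul_of_nonneg_left hq6 ha
        _ ≤ (1 - hfun S) * (1 + hfun S) * (qf S)^6 := by
            nlinarith [mul_nonneg (mul_nonneg ha (by linarith : (0:ℝ) ≤ -hfun S))
              (pow_nonneg (by linarith : (0:ℝ) ≤ qf S) 6)]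
        _ = (27/4) * (Dt S)^2 := hkey
    have hq6pos : (0:ℝ) < (qf S₀/2)^6 := by positivity
    have hfrac : (1 + hfun S)/2 ≤ (27/8) * ((qf S₀/2)^6)⁻¹ * (Dt S)^2 := by
      have h5 : (1 + hfun S) ≤ 27/4 * (Dt S)^2 * ((qf S₀/2)^6)⁻¹ := by
        rw [← le_div_iff₀ hq6pos] at hstep
        rwa [div_eq_mul_inv] at hstep
      nlinarith [h5]
    have harc : π/3 - θf S ≤ (π/3) * Real.sqrt ((1 + hfun S)/2) := by
      rw [θf_eq]
      have hneg := arccos_le_sqrt (x := -hfun S) (by linarith) (by linarith)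
      rw [Real.arccos_neg] at hneg
      have hs : Real.sqrt ((1 - -hfun S)/2) = Real.sqrt ((1 + hfun S)/2) := by ring_nf
      rw [hs] at hneg
      linarith
    have hsq : Real.sqrt ((1 + hfun S)/2)
        ≤ Real.sqrt ((27/8) * ((qf S₀/2)^6)⁻¹) * |Dt S| := by
      calc Real.sqrt ((1 + hfun S)/2)
          ≤ Real.sqrt ((27/8) * ((qf S₀/2)^6)⁻¹ * (Dt S)^2) := Real.sqrt_le_sqrt hfrac
        _ = Real.sqrt ((27/8) * ((qf S₀/2)^6)⁻¹) * Real.sqrt ((Dt S)^2) := by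
            rw [Real.sqrt_mul (by positivity)]
        _ = _ := by rw [Real.sqrt_sq_eq_abs]
    have hpi' := Real.pi_pos
    rw [Real.norm_eq_abs, Real.norm_eq_abs, abs_of_nonpos (by linarith), neg_sub]
    calc π/3 - θf S ≤ (π/3) * Real.sqrt ((1 + hfun S)/2) := harc
      _ ≤ (π/3) * (Real.sqrt ((27/8) * ((qf S₀/2)^6)⁻¹) * |Dt S|) := by
          apply mul_le_mul_of_nonneg_left hsq (by positivity)
      _ = (π/3) * Real.sqrt ((27/8) * ((qf S₀/2)^6)⁻¹) * |Dt S| := by ring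
  have hθO : (fun S => θf S - π/3) =O[nhds S₀] (fun S => S - S₀) := hθD.trans hD
  have hlittle : (fun x => g x - g (π/3)) =o[nhdsWithin (π/3) (Set.Iic (π/3))]
      (fun x => x - π/3) := by
    have := hpi.isLittleO
    simpa using this
  have htend : Filter.Tendsto θf (nhds S₀) (nhdsWithin (π/3) (Set.Iic (π/3))) := by
    rw [tendsto_nhdsWithin_iff]
    constructor
    · have := (θf_cont hS).tendsto
      rwa [hθ0] at this
    · filter_upwards with S using θf_le S
  have hcomp : (fun S => g (θf S) - g (π/3)) =o[nhds S₀] (fun S => θf S - π/3) :=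
    hlittle.comp_tendsto htend
  have hfinal : (fun S => g (θf S) - g (θf S₀)) =o[nhds S₀] (fun S => S - S₀) := by
    rw [hθ0]
    exact hcomp.trans_isBigO hθO
  exact .of_isLittleO (by simpa using hfinal)

noncomputable def ψ (t : ℝ) : ℝ :=
  (1/3) * Real.arccos (27*(1-t^2)/(Real.sqrt (3*(3+t^2)))^3)

lemma sline : ∀ t : ℝ, (Real.sqrt (3*(3+t^2)))^2 = 3*(3+t^2) := fun t =>
  Real.sq_sqrt (by positivity)

lemma sline_ge (t : ℝ) : 3 ≤ Real.sqrt (3*(3+t^2)) := by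
  have h2 := sline t
  have h0 := Real.sqrt_nonneg (3*(3+t^2))
  nlinarith [sq_nonneg (Real.sqrt (3*(3+t^2)) - 3), sq_nonneg t]

lemma hline_mem {t : ℝ} (ht0 : 0 ≤ t) (ht : t ≤ 1/2) :
    0 ≤ 27*(1-t^2)/(Real.sqrt (3*(3+t^2)))^3 ∧
    27*(1-t^2)/(Real.sqrt (3*(3+t^2)))^3 ≤ 1 - t^2 := by
  set s := Real.sqrt (3*(3+t^2)) with hs
  have hsge : (3:ℝ) ≤ s := sline_ge t
  have hs3 : (27:ℝ) ≤ s^3 := by nlinarith [sq_nonneg (s-3), sq_nonneg (s+3), hsge]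
  have hspos : (0:ℝ) < s^3 := by positivity
  constructor
  · apply div_nonneg (by nlinarith) (by positivity)
  · rw [div_le_iff₀ hspos]
    nlinarith [mul_le_mul_of_nonneg_left hs3 (show (0:ℝ) ≤ 1-t^2 by nlinarith)]

lemma ψ_lower {t : ℝ} (ht0 : 0 ≤ t) (ht : t ≤ 1/2) : Real.sqrt 2/3 * t ≤ ψ t := by
  obtain ⟨hm0, hm1⟩ := hline_mem ht0 ht
  set x := 27*(1-t^2)/(Real.sqrt (3*(3+t^2)))^3 with hx
  have hx1 : x ≤ 1 := by nlinarith
  have harc := sqrt_le_arccos (by linarith : (-1:ℝ) ≤ x) hx1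
  have h2 : 2*t^2 ≤ 2*(1-x) := by nlinarith
  have hsq : Real.sqrt (2*t^2) ≤ Real.sqrt (2*(1-x)) := Real.sqrt_le_sqrt h2
  have hval : Real.sqrt (2*t^2) = Real.sqrt 2 * t := by
    rw [Real.sqrt_mul (by norm_num), Real.sqrt_sq ht0]
  rw [hval] at hsq
  have : Real.sqrt 2 * t ≤ Real.arccos x := le_trans hsq harc
  rw [ψ]
  rw [← hx]
  linarith

lemma ψ_zero : ψ 0 = 0 := by
  have h3 : Real.sqrt (3*(3+(0:ℝ)^2)) = 3 := by
    rw [show (3:ℝ)*(3+(0:ℝ)^2) = 3^2 by norm_num, Real.sqrt_sq (by norm_num)]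
  rw [ψ, h3]
  norm_num [Real.arccos_one]

lemma θf_line0 (t : ℝ) : θf (-1+t, -1-t) = ψ t := by
  have h1 : ((-1:ℝ)+t)^2 + (-1+t)*(-1-t) + (-1-t)^2 = 3+t^2 := by ring
  have h2 : (27/2:ℝ)*((-1+t)*(-1-t)*(-(-1+t)-(-1-t))) = 27*(1-t^2) := by ring
  show (1/3) * Real.arccos ((27/2)*(((-1:ℝ)+t)*(-1-t)*(-(-1+t)-(-1-t))) /
      (Real.sqrt (3*(((-1:ℝ)+t)^2 + (-1+t)*(-1-t) + (-1-t)^2)))^3) = ψ t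
  rw [h1, h2, ψ]

lemma θf_line1 (t : ℝ) : θf (1+t, 1-t) = π/3 - ψ t := by
  have h1 : ((1:ℝ)+t)^2 + (1+t)*(1-t) + (1-t)^2 = 3+t^2 := by ring
  have h2 : (27/2:ℝ)*((1+t)*(1-t)*(-(1+t)-(1-t))) = -(27*(1-t^2)) := by ring
  show (1/3) * Real.arccos ((27/2)*(((1:ℝ)+t)*(1-t)*(-(1+t)-(1-t))) /
      (Real.sqrt (3*(((1:ℝ)+t)^2 + (1+t)*(1-t) + (1-t)^2)))^3) = π/3 - ψ t
  rw [h1, h2, ψ, neg_div, Real.arccos_neg]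
  ring

lemma gθ_pos {g : ℝ → ℝ} (hgpos : ∀ t ∈ Set.Icc 0 (π/3), 0 < g t) (S : ℝ × ℝ) :
    0 < g (θf S) := hgpos _ ⟨θf_nonneg S, θf_le S⟩

lemma comp_diff_of_Gf {g : ℝ → ℝ} (hgpos : ∀ t ∈ Set.Icc 0 (π/3), 0 < g t)
    {S₀ : ℝ × ℝ} (hS : S₀ ≠ (0,0)) (hdiff : DifferentiableAt ℝ (Gf g) S₀) :
    DifferentiableAt ℝ (fun S => g (θf S)) S₀ := by
  have hq0 := qf_pos hS
  have hG0 : Gf g S₀ ≠ 0 := ne_of_gt (div_pos hq0 (gθ_pos hgpos S₀))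
  have hdiv : DifferentiableAt ℝ (fun S => qf S / Gf g S) S₀ :=
    diffAt_div (qf_diff hS) hdiff hG0
  have heq : (fun S => g (θf S)) =ᶠ[nhds S₀] (fun S => qf S / Gf g S) := by
    filter_upwards [qf_cont.continuousAt.eventually (eventually_gt_nhds hq0)] with S hq
    have hg := gθ_pos hgpos S
    rw [Gf]
    field_simp
  exact hdiv.congr_of_eventuallyEq heq

lemma slope_tendsto_zero {g : ℝ → ℝ} {gd0 : ℝ}
    (h0 : HasDerivWithinAt g gd0 (Set.Ici 0) 0) :
    Filter.Tendsto (fun y => (g y - g 0)/(y - 0)) (nhdsWithin 0 (Set.Ioi 0)) (nhds gd0) := by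
  have h1 := hasDerivWithinAt_iff_tendsto_slope.1 h0
  rw [Set.Ici_sdiff_left] at h1
  apply h1.congr
  intro y
  rw [slope_def_field]

lemma slope_tendsto_pi {g : ℝ → ℝ} {gdpi : ℝ}
    (hpi : HasDerivWithinAt g gdpi (Set.Iic (π/3)) (π/3)) :
    Filter.Tendsto (fun y => (g y - g (π/3))/(y - π/3)) (nhdsWithin (π/3) (Set.Iio (π/3)))
      (nhds gdpi) := by
  have h1 := hasDerivWithinAt_iff_tendsto_slope.1 hpi
  rw [Set.Iic_diff_right] at h1
  apply h1.congr
  intro y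
  rw [slope_def_field]

lemma ψ_even (t : ℝ) : ψ (-t) = ψ t := by simp only [ψ, neg_sq]

lemma ψ_cont : ContinuousAt ψ 0 := by
  have hS : ((-1:ℝ),(-1:ℝ)) ≠ ((0:ℝ),(0:ℝ)) := by simp
  have hLc : ContinuousAt (fun t : ℝ => ((-1+t, -1-t) : ℝ × ℝ)) 0 := by fun_prop
  have e : ((fun t : ℝ => ((-1+t, -1-t) : ℝ × ℝ)) 0) = ((-1,-1) : ℝ × ℝ) := by norm_num
  have hθc : ContinuousAt θf ((fun t : ℝ => ((-1+t, -1-t) : ℝ × ℝ)) 0) := by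
    rw [e]; exact θf_cont hS
  have h1 : ContinuousAt (θf ∘ (fun t : ℝ => ((-1+t, -1-t) : ℝ × ℝ))) 0 :=
    ContinuousAt.comp (x := (0:ℝ)) (g := θf)
      (f := fun t : ℝ => ((-1+t, -1-t) : ℝ × ℝ)) hθc hLc
  exact h1.congr (by filter_upwards with t using θf_line0 t)

lemma ψ_tendsto : Filter.Tendsto ψ (nhdsWithin 0 (Set.Ioi 0)) (nhdsWithin 0 (Set.Ioi 0)) := by
  rw [tendsto_nhdsWithin_iff]
  constructor
  · have := ψ_cont.tendsto
    rw [ψ_zero] at this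
    exact this.mono_left nhdsWithin_le_nhds
  · filter_upwards [Ioc_mem_nhdsGT_of_mem (by norm_num : (0:ℝ) ∈ Set.Ico 0 (1/2))]
      with t ht
    have := ψ_lower ht.1.le ht.2
    have h2 : (0:ℝ) < Real.sqrt 2 / 3 * t := mul_pos (by positivity) ht.1
    exact lt_of_lt_of_le h2 this

lemma forward_zero {g : ℝ → ℝ} {gd0 : ℝ}
    (hgpos : ∀ t ∈ Set.Icc 0 (π/3), 0 < g t)
    (h0 : HasDerivWithinAt g gd0 (Set.Ici 0) 0)
    (hdiff : DifferentiableAt ℝ (Gf g) (-1,-1)) : gd0 = 0 := by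
  by_contra hne
  have hS : ((-1:ℝ),(-1:ℝ)) ≠ ((0:ℝ),(0:ℝ)) := by simp
  have hcomp := comp_diff_of_Gf hgpos hS hdiff
  have hcomp' : DifferentiableAt ℝ (fun S => g (θf S))
      ((fun t : ℝ => ((-1+t, -1-t) : ℝ × ℝ)) 0) := by
    have : ((fun t : ℝ => ((-1+t, -1-t) : ℝ × ℝ)) 0) = ((-1,-1) : ℝ × ℝ) := by norm_num
    rw [this]
    exact hcomp
  have hLd : DifferentiableAt ℝ (fun t : ℝ => ((-1+t, -1-t) : ℝ × ℝ)) 0 := by fun_prop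
  have hφd : DifferentiableAt ℝ (fun t => g (ψ t)) 0 := by
    have h1 := hcomp'.comp (0:ℝ) hLd
    have h2 : ((fun S => g (θf S)) ∘ (fun t : ℝ => ((-1+t, -1-t) : ℝ × ℝ)))
        = fun t => g (ψ t) := by
      funext t
      simp only [Function.comp]
      rw [θf_line0]
    rwa [h2] at h1
  -- the derivative is zero by evenness
  have hd : HasDerivAt (fun t => g (ψ t)) (deriv (fun t => g (ψ t)) 0) 0 := hφd.hasDerivAt
  have hdneg : HasDerivAt (fun t => g (ψ (-t))) (deriv (fun t => g (ψ t)) 0 * (-1)) 0 := by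
    have hneg : HasDerivAt (fun t : ℝ => -t) (-1) (0:ℝ) := by
      simpa using (hasDerivAt_neg (0:ℝ))
    have hd' : HasDerivAt (fun t => g (ψ t)) (deriv (fun t => g (ψ t)) 0) (-(0:ℝ)) := by
      rw [neg_zero]; exact hd
    have := HasDerivAt.comp (0:ℝ) hd' hneg
    simpa [Function.comp_def] using this
  have hdeq : (fun t => g (ψ (-t))) = (fun t => g (ψ t)) := by
    funext t; rw [ψ_even]
  rw [hdeq] at hdneg
  have hzero : deriv (fun t => g (ψ t)) 0 = 0 := by
    have := hd.unique hdneg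
    linarith
  rw [hzero] at hd
  -- slope of φ tends to 0 on the right
  have hφslope : Filter.Tendsto (fun t => (g (ψ t) - g (ψ 0))/(t - 0))
      (nhdsWithin 0 (Set.Ioi 0)) (nhds 0) := by
    have h1 := hasDerivAt_iff_tendsto_slope.1 hd
    have h2 := h1.mono_left (nhdsWithin_mono _ (fun x hx => ne_of_gt hx : Set.Ioi (0:ℝ) ⊆ {(0:ℝ)}ᶜ))
    apply h2.congr
    intro y
    rw [slope_def_field]
  -- slope of g composed with ψ tends to gd0
  have hA : Filter.Tendsto (fun t => (g (ψ t) - g 0)/(ψ t - 0))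
      (nhdsWithin 0 (Set.Ioi 0)) (nhds gd0) :=
    (slope_tendsto_zero h0).comp ψ_tendsto
  -- the quotient tendsto
  have hquot := hφslope.div hA hne
  rw [zero_div] at hquot
  have hAne : ∀ᶠ t in nhdsWithin 0 (Set.Ioi 0), (g (ψ t) - g 0)/(ψ t - 0) ≠ 0 :=
    hA.eventually_ne hne
  have hratio : Filter.Tendsto (fun t => ψ t / t) (nhdsWithin 0 (Set.Ioi 0)) (nhds 0) := by
    apply hquot.congr'
    filter_upwards [hAne, Ioc_mem_nhdsGT_of_mem (by norm_num : (0:ℝ) ∈ Set.Ico 0 (1/2))]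
      with t hAt ht
    have hψpos : 0 < ψ t := by
      have := ψ_lower ht.1.le ht.2
      have h2 : (0:ℝ) < Real.sqrt 2 / 3 * t := mul_pos (by positivity) ht.1
      linarith
    have hnum : g (ψ t) - g 0 ≠ 0 := by
      intro hc
      apply hAt
      rw [hc, zero_div]
    have ht0 : t ≠ 0 := ne_of_gt ht.1
    have hψ0 : ψ t ≠ 0 := ne_of_gt hψpos
    simp only [Pi.div_apply, ψ_zero, sub_zero]
    field_simp
  have hge : ∀ᶠ t in nhdsWithin 0 (Set.Ioi 0), Real.sqrt 2 / 3 ≤ ψ t / t := by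
    filter_upwards [Ioc_mem_nhdsGT_of_mem (by norm_num : (0:ℝ) ∈ Set.Ico 0 (1/2))]
      with t ht
    rw [le_div_iff₀ ht.1]
    exact ψ_lower ht.1.le ht.2
  have hfinal : Real.sqrt 2 / 3 ≤ 0 := ge_of_tendsto hratio hge
  have : (0:ℝ) < Real.sqrt 2 / 3 := by positivity
  linarith

lemma forward_pi {g : ℝ → ℝ} {gdpi : ℝ}
    (hgpos : ∀ t ∈ Set.Icc 0 (π/3), 0 < g t)
    (hpi : HasDerivWithinAt g gdpi (Set.Iic (π/3)) (π/3))
    (hdiff : DifferentiableAt ℝ (Gf g) (1,1)) : gdpi = 0 := by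
  by_contra hne
  have hS : ((1:ℝ),(1:ℝ)) ≠ ((0:ℝ),(0:ℝ)) := by simp
  have hcomp := comp_diff_of_Gf hgpos hS hdiff
  have hcomp' : DifferentiableAt ℝ (fun S => g (θf S))
      ((fun t : ℝ => ((1+t, 1-t) : ℝ × ℝ)) 0) := by
    have : ((fun t : ℝ => ((1+t, 1-t) : ℝ × ℝ)) 0) = ((1,1) : ℝ × ℝ) := by norm_num
    rw [this]
    exact hcomp
  have hLd : DifferentiableAt ℝ (fun t : ℝ => ((1+t, 1-t) : ℝ × ℝ)) 0 := by fun_prop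
  have hφd : DifferentiableAt ℝ (fun t => g (π/3 - ψ t)) 0 := by
    have h1 := hcomp'.comp (0:ℝ) hLd
    have h2 : ((fun S => g (θf S)) ∘ (fun t : ℝ => ((1+t, 1-t) : ℝ × ℝ)))
        = fun t => g (π/3 - ψ t) := by
      funext t
      simp only [Function.comp]
      rw [θf_line1]
    rwa [h2] at h1
  have hd : HasDerivAt (fun t => g (π/3 - ψ t)) (deriv (fun t => g (π/3 - ψ t)) 0) 0 :=
    hφd.hasDerivAt
  have hdneg : HasDerivAt (fun t => g (π/3 - ψ (-t)))
      (deriv (fun t => g (π/3 - ψ t)) 0 * (-1)) 0 := by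
    have hneg : HasDerivAt (fun t : ℝ => -t) (-1) (0:ℝ) := by
      simpa using (hasDerivAt_neg (0:ℝ))
    have hd' : HasDerivAt (fun t => g (π/3 - ψ t)) (deriv (fun t => g (π/3 - ψ t)) 0)
        (-(0:ℝ)) := by
      rw [neg_zero]; exact hd
    have := HasDerivAt.comp (0:ℝ) hd' hneg
    simpa [Function.comp_def] using this
  have hdeq : (fun t => g (π/3 - ψ (-t))) = (fun t => g (π/3 - ψ t)) := by
    funext t; rw [ψ_even]
  rw [hdeq] at hdneg
  have hzero : deriv (fun t => g (π/3 - ψ t)) 0 = 0 := by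
    have := hd.unique hdneg
    linarith
  rw [hzero] at hd
  have hφslope : Filter.Tendsto (fun t => (g (π/3 - ψ t) - g (π/3 - ψ 0))/(t - 0))
      (nhdsWithin 0 (Set.Ioi 0)) (nhds 0) := by
    have h1 := hasDerivAt_iff_tendsto_slope.1 hd
    have h2 := h1.mono_left (nhdsWithin_mono _
      (fun x hx => ne_of_gt hx : Set.Ioi (0:ℝ) ⊆ {(0:ℝ)}ᶜ))
    apply h2.congr
    intro y
    rw [slope_def_field]
  have htend : Filter.Tendsto (fun t => π/3 - ψ t) (nhdsWithin 0 (Set.Ioi 0))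
      (nhdsWithin (π/3) (Set.Iio (π/3))) := by
    rw [tendsto_nhdsWithin_iff]
    constructor
    · have h1 : Filter.Tendsto ψ (nhdsWithin 0 (Set.Ioi 0)) (nhds 0) := by
        have := ψ_cont.tendsto
        rw [ψ_zero] at this
        exact this.mono_left nhdsWithin_le_nhds
      have := h1.const_sub (π/3)
      simpa using this
    · filter_upwards [Ioc_mem_nhdsGT_of_mem (by norm_num : (0:ℝ) ∈ Set.Ico 0 (1/2))]
        with t ht
      have hl := ψ_lower ht.1.le ht.2
      have h2 : (0:ℝ) < Real.sqrt 2 / 3 * t := mul_pos (by positivity) ht.1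
      have : 0 < ψ t := lt_of_lt_of_le h2 hl
      simp only [Set.mem_Iio]
      linarith
  have hA : Filter.Tendsto (fun t => (g (π/3 - ψ t) - g (π/3))/((π/3 - ψ t) - π/3))
      (nhdsWithin 0 (Set.Ioi 0)) (nhds gdpi) :=
    (slope_tendsto_pi hpi).comp htend
  have hquot := hφslope.div hA hne
  rw [zero_div] at hquot
  have hAne : ∀ᶠ t in nhdsWithin 0 (Set.Ioi 0),
      (g (π/3 - ψ t) - g (π/3))/((π/3 - ψ t) - π/3) ≠ 0 := hA.eventually_ne hne
  have hratio : Filter.Tendsto (fun t => ψ t / t) (nhdsWithin 0 (Set.Ioi 0)) (nhds 0) := by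
    have hqneg := hquot.neg
    rw [neg_zero] at hqneg
    apply hqneg.congr'
    filter_upwards [hAne, Ioc_mem_nhdsGT_of_mem (by norm_num : (0:ℝ) ∈ Set.Ico 0 (1/2))]
      with t hAt ht
    have hψpos : 0 < ψ t := by
      have := ψ_lower ht.1.le ht.2
      have h2 : (0:ℝ) < Real.sqrt 2 / 3 * t := mul_pos (by positivity) ht.1
      linarith
    have hnum : g (π/3 - ψ t) - g (π/3) ≠ 0 := by
      intro hc
      apply hAt
      rw [hc, zero_div]
    have ht0 : t ≠ 0 := ne_of_gt ht.1
    have hψ0 : ψ t ≠ 0 := ne_of_gt hψpos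
    simp only [Pi.div_apply, ψ_zero, sub_zero]
    have hden : π/3 - ψ t - π/3 = -(ψ t) := by ring
    rw [hden, div_div_div_comm, div_self hnum, one_div_div, neg_div, neg_neg]
  have hge : ∀ᶠ t in nhdsWithin 0 (Set.Ioi 0), Real.sqrt 2 / 3 ≤ ψ t / t := by
    filter_upwards [Ioc_mem_nhdsGT_of_mem (by norm_num : (0:ℝ) ∈ Set.Ico 0 (1/2))]
      with t ht
    rw [le_div_iff₀ ht.1]
    exact ψ_lower ht.1.le ht.2
  have hfinal : Real.sqrt 2 / 3 ≤ 0 := ge_of_tendsto hratio hge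
  have : (0:ℝ) < Real.sqrt 2 / 3 := by positivity
  linarith

lemma arccos_lt_pi {x : ℝ} (h : -1 < x) : Real.arccos x < π :=
  lt_of_le_of_ne (Real.arccos_le_pi x)
    (fun hc => absurd (Real.arccos_eq_pi.1 hc) (not_le.2 h))

lemma θf_diff_interior {S : ℝ × ℝ} (hS : S ≠ (0,0)) (h1 : hfun S ≠ -1) (h2 : hfun S ≠ 1) :
    DifferentiableAt ℝ θf S := by
  have harc : DifferentiableAt ℝ Real.arccos (hfun S) :=
    Real.differentiableAt_arccos.2 ⟨h1, h2⟩
  have hcomp : DifferentiableAt ℝ (fun S => Real.arccos (hfun S)) S :=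
    harc.comp S (hfun_diff hS)
  have : DifferentiableAt ℝ (fun S => (1/3 : ℝ) * Real.arccos (hfun S)) S :=
    hcomp.const_mul _
  exact this

/-- G = q/g(θ) is differentiable away from the origin iff the one-sided
derivatives of g vanish at both endpoints. -/
theorem smoothness_of_G_iff
    (g : ℝ → ℝ)
    (hgc : ContinuousOn g (Set.Icc 0 (Real.pi / 3)))
    (hgpos : ∀ t ∈ Set.Icc 0 (Real.pi / 3), 0 < g t)
    (hgd : ∀ t ∈ Set.Ioo 0 (Real.pi / 3), DifferentiableAt ℝ g t)
    (hgd' : ContinuousOn (deriv g) (Set.Ioo 0 (Real.pi / 3)))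
    (gd0 gdpi : ℝ)
    (h0 : HasDerivWithinAt g gd0 (Set.Ici 0) 0)
    (hpi : HasDerivWithinAt g gdpi (Set.Iic (Real.pi / 3)) (Real.pi / 3)) :
    (∀ S : ℝ × ℝ, S ≠ (0, 0) → DifferentiableAt ℝ (Gf g) S) ↔
      (gd0 = 0 ∧ gdpi = 0) := by
  constructor
  · intro hdiff
    exact ⟨forward_zero hgpos h0 (hdiff _ (by simp)),
           forward_pi hgpos hpi (hdiff _ (by simp))⟩
  · rintro ⟨hgd0, hgdpi⟩ S hS
    rw [hgd0] at h0
    rw [hgdpi] at hpi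
    have hq := qf_pos hS
    have hgθ : g (θf S) ≠ 0 := ne_of_gt (gθ_pos hgpos S)
    have hden : DifferentiableAt ℝ (fun S => g (θf S)) S := by
      rcases eq_or_ne (hfun S) 1 with h1 | h1
      · exact (comp_diff_at_one hS h1 h0).differentiableAt
      · rcases eq_or_ne (hfun S) (-1) with h2 | h2
        · exact (comp_diff_at_neg_one hS h2 hpi).differentiableAt
        · have hθd := θf_diff_interior hS h2 h1
          obtain ⟨hm1, hm2⟩ := hfun_mem hS
          have hθmem : θf S ∈ Set.Ioo 0 (π/3) := by
            constructor
            · rw [θf_eq]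
              have := Real.arccos_pos.2 (lt_of_le_of_ne hm2 h1)
              linarith
            · rw [θf_eq]
              have := arccos_lt_pi (lt_of_le_of_ne hm1 (Ne.symm h2))
              linarith
          exact (hgd _ hθmem).comp S hθd
    exact diffAt_div (qf_diff hS) hden hgθ
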